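/- Let a ≥ 1, let w_1,…,w_a be indeterminates, set W(y) = ∏_{r=1}^a (y − w_r) and W_r(y) = ∏_{s≠r}(y − w_s), and let Z(y) ∈ ℂ[w_1,…,w_a][y] be any polynomial in y. Assume the w_r are specialized so that w_r − w_s ∉ {0, 1, −1} for all r ≠ s. Then the rational function Z(y)/(W(y)·W(y−1)) − ∑_{r=1}^a [ Z(w_r+1)/((y−w_r−1)·W_r(w_r+1)·W_r(w_r)) − Z(w_r)/((y−w_r)·W_r(w_r)·W_r(w_r−1)) ] is a polynomial in y. -/

import Mathlib

open Polynomial Finset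

theorem stmt19 (a : ℕ) (ha : 1 ≤ a) (w : Fin a → ℂ)
    (hw : ∀ r s : Fin a, r ≠ s → w r - w s ≠ 0 ∧ w r - w s ≠ 1 ∧ w r - w s ≠ -1)
    (Z : Polynomial ℂ) :
    ∃ Q : Polynomial ℂ, ∀ y : ℂ, (∀ r, y ≠ w r ∧ y ≠ w r + 1) →
      Z.eval y / ((∏ r, (y - w r)) * (∏ r, (y - 1 - w r)))
        - ∑ r, (Z.eval (w r + 1) /
              ((y - w r - 1) * (∏ s ∈ Finset.univ.erase r, (w r + 1 - w s)) *
                (∏ s ∈ Finset.univ.erase r, (w r - w s)))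
            - Z.eval (w r) /
              ((y - w r) * (∏ s ∈ Finset.univ.erase r, (w r - w s)) *
                (∏ s ∈ Finset.univ.erase r, (w r - 1 - w s))))
        = Q.eval y := by
  classical
  set v : Fin a ⊕ Fin a → ℂ := Sum.elim w (fun r => w r + 1) with hv
  -- injectivity of nodes
  have hvinj : Set.InjOn v (Finset.univ : Finset (Fin a ⊕ Fin a)) := by
    rintro (r | r) - (s | s) - hij <;> simp only [v, Sum.elim_inl, Sum.elim_inr] at hij
    · by_cases h : r = s
      · rw [h]
      · exact absurd (by linear_combination hij) (hw r s h).1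
    · exfalso
      by_cases h : r = s
      · subst h; simp at hij
      · exact (hw r s h).2.1 (by linear_combination hij)
    · exfalso
      by_cases h : r = s
      · subst h; simp at hij
      · exact (hw r s h).2.2 (by linear_combination hij)
    · by_cases h : r = s
      · rw [h]
      · exact absurd (by linear_combination hij) (hw r s h).1
  set D : Polynomial ℂ := ∏ i : Fin a ⊕ Fin a, (X - C (v i)) with hDdef
  have hD : D.Monic := monic_prod_of_monic _ _ fun i _ => monic_X_sub_C _
  have hdegD : D.degree = ((Finset.univ : Finset (Fin a ⊕ Fin a)).card : ℕ) := by
    rw [hDdef, degree_prod]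
    simp [degree_X_sub_C]
  set rem : Polynomial ℂ := Z %ₘ D with hremdef
  have hremlt : rem.degree < ((Finset.univ : Finset (Fin a ⊕ Fin a)).card : ℕ) := by
    rw [← hdegD]
    exact degree_modByMonic_lt Z hD
  have hLag : rem = Lagrange.interpolate Finset.univ v fun i => rem.eval (v i) :=
    Lagrange.eq_interpolate hvinj hremlt
  refine ⟨Z /ₘ D, fun y hy => ?_⟩
  have hyv : ∀ i, y - v i ≠ 0 := by
    rintro (r | r) <;> simp only [v, Sum.elim_inl, Sum.elim_inr] <;> rw [sub_ne_zero]
    · exact (hy r).1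
    · exact (hy r).2
  have hDy : D.eval y ≠ 0 := by
    rw [hDdef, eval_prod]
    exact prod_ne_zero_iff.mpr fun i _ => by simpa using hyv i
  have hDveq : ∀ i, D.eval (v i) = 0 := by
    intro i
    rw [hDdef, eval_prod]
    exact prod_eq_zero (mem_univ i) (by simp)
  have hremval : ∀ i, rem.eval (v i) = Z.eval (v i) := by
    intro i
    conv_rhs => rw [← modByMonic_add_div Z D]
    simp [hremdef, hDveq i]
  have hsplit : D.eval y = (∏ r, (y - w r)) * (∏ r, (y - 1 - w r)) := by
    rw [hDdef, eval_prod]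
    simp only [eval_sub, eval_X, eval_C]
    rw [Fintype.prod_sum_type]
    congr 1
    exact Finset.prod_congr rfl fun r _ => by simp [v]; ring
  -- nonzero products of node differences
  have hcne : ∀ i : Fin a ⊕ Fin a, (∏ j ∈ Finset.univ.erase i, (v i - v j)) ≠ 0 := by
    intro i
    refine prod_ne_zero_iff.mpr fun j hj => sub_ne_zero_of_ne fun h => ?_
    exact (mem_erase.mp hj).1 ((hvinj (by simp) (by simp) h).symm)
  -- key evaluation of the Lagrange form at y
  have hLagEval : rem.eval y
      = ∑ i : Fin a ⊕ Fin a, rem.eval (v i) *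
          ((∏ j ∈ Finset.univ.erase i, (v i - v j))⁻¹ * ∏ j ∈ Finset.univ.erase i, (y - v j)) := by
    conv_lhs => rw [hLag]
    rw [Lagrange.interpolate_apply, eval_finset_sum]
    refine Finset.sum_congr rfl fun i _ => ?_
    rw [eval_mul, eval_C, Lagrange.basis, eval_prod]
    congr 1
    rw [← prod_inv_distrib, ← prod_mul_distrib]
    refine Finset.prod_congr rfl fun j _ => ?_
    simp [Lagrange.basisDivisor]
  have hterm : ∀ i : Fin a ⊕ Fin a,
      (rem.eval (v i) *
          ((∏ j ∈ Finset.univ.erase i, (v i - v j))⁻¹ * ∏ j ∈ Finset.univ.erase i, (y - v j)))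
        / D.eval y
      = rem.eval (v i) / ((y - v i) * ∏ j ∈ Finset.univ.erase i, (v i - v j)) := by
    intro i
    have hP : D.eval y = (y - v i) * ∏ j ∈ Finset.univ.erase i, (y - v j) := by
      rw [hDdef, eval_prod, ← Finset.mul_prod_erase _ _ (mem_univ i)]
      simp
    have h2 : (∏ j ∈ Finset.univ.erase i, (y - v j)) ≠ 0 :=
      prod_ne_zero_iff.mpr fun j _ => hyv j
    rw [hP]
    rw [div_eq_div_iff (mul_ne_zero (hyv i) h2) (mul_ne_zero (hyv i) (hcne i))]
    rw [show rem.eval (v i) * ((∏ j ∈ Finset.univ.erase i, (v i - v j))⁻¹ *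
          ∏ j ∈ Finset.univ.erase i, (y - v j)) * ((y - v i) * ∏ j ∈ Finset.univ.erase i, (v i - v j))
        = rem.eval (v i) * ((y - v i) * ∏ j ∈ Finset.univ.erase i, (y - v j)) *
          ((∏ j ∈ Finset.univ.erase i, (v i - v j))⁻¹ * ∏ j ∈ Finset.univ.erase i, (v i - v j))
        from by ring, inv_mul_cancel₀ (hcne i), mul_one]
  -- erase lemmas on the sum type
  have herasel : ∀ (r : Fin a) (g : Fin a ⊕ Fin a → ℂ),
      ∏ j ∈ (Finset.univ : Finset (Fin a ⊕ Fin a)).erase (Sum.inl r), g j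
        = (∏ s ∈ Finset.univ.erase r, g (Sum.inl s)) * ∏ s, g (Sum.inr s) := by
    intro r g
    rw [show (Finset.univ : Finset (Fin a ⊕ Fin a)).erase (Sum.inl r)
        = (Finset.univ.erase r).disjSum Finset.univ by
      ext x; cases x <;> simp [ne_comm], Finset.prod_disjSum]
  have heraser : ∀ (r : Fin a) (g : Fin a ⊕ Fin a → ℂ),
      ∏ j ∈ (Finset.univ : Finset (Fin a ⊕ Fin a)).erase (Sum.inr r), g j
        = (∏ s, g (Sum.inl s)) * ∏ s ∈ Finset.univ.erase r, g (Sum.inr s) := by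
    intro r g
    rw [show (Finset.univ : Finset (Fin a ⊕ Fin a)).erase (Sum.inr r)
        = Finset.univ.disjSum (Finset.univ.erase r) by
      ext x; cases x <;> simp [ne_comm], Finset.prod_disjSum]
  -- compute the two kinds of terms
  have hterm_l : ∀ r : Fin a,
      rem.eval (v (Sum.inl r)) / ((y - v (Sum.inl r)) * ∏ j ∈ Finset.univ.erase (Sum.inl r), (v (Sum.inl r) - v j))
      = - (Z.eval (w r) /
          ((y - w r) * (∏ s ∈ Finset.univ.erase r, (w r - w s)) *
            (∏ s ∈ Finset.univ.erase r, (w r - 1 - w s)))) := by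
    intro r
    rw [hremval, herasel]
    have h1 : (∏ s, (v (Sum.inl r) - v (Sum.inr s)))
        = -(∏ s ∈ Finset.univ.erase r, (w r - 1 - w s)) := by
      rw [← Finset.mul_prod_erase _ _ (mem_univ r)]
      simp only [v, Sum.elim_inl, Sum.elim_inr]
      rw [show w r - (w r + 1) = -1 by ring]
      rw [neg_one_mul, neg_inj]
      exact Finset.prod_congr rfl fun s _ => by ring
    simp only [v, Sum.elim_inl, Sum.elim_inr] at h1 ⊢
    rw [h1, ← div_neg]
    congr 1
    ring
  have hterm_r : ∀ r : Fin a,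
      rem.eval (v (Sum.inr r)) / ((y - v (Sum.inr r)) * ∏ j ∈ Finset.univ.erase (Sum.inr r), (v (Sum.inr r) - v j))
      = Z.eval (w r + 1) /
          ((y - w r - 1) * (∏ s ∈ Finset.univ.erase r, (w r + 1 - w s)) *
            (∏ s ∈ Finset.univ.erase r, (w r - w s))) := by
    intro r
    rw [hremval, heraser]
    have h1 : (∏ s, (v (Sum.inr r) - v (Sum.inl s)))
        = ∏ s ∈ Finset.univ.erase r, (w r + 1 - w s) := by
      rw [← Finset.mul_prod_erase _ _ (mem_univ r)]
      simp [v]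
    have h2 : (∏ s ∈ Finset.univ.erase r, (v (Sum.inr r) - v (Sum.inr s)))
        = ∏ s ∈ Finset.univ.erase r, (w r - w s) := by
      refine Finset.prod_congr rfl fun s _ => ?_
      simp only [v, Sum.elim_inr]; ring
    simp only [v, Sum.elim_inr] at h1 h2 ⊢
    rw [h1, h2]
    congr 1
    ring
  -- assemble
  have hfrac : rem.eval y / D.eval y
      = ∑ r, (Z.eval (w r + 1) /
              ((y - w r - 1) * (∏ s ∈ Finset.univ.erase r, (w r + 1 - w s)) *
                (∏ s ∈ Finset.univ.erase r, (w r - w s)))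
            - Z.eval (w r) /
              ((y - w r) * (∏ s ∈ Finset.univ.erase r, (w r - w s)) *
                (∏ s ∈ Finset.univ.erase r, (w r - 1 - w s)))) := by
    rw [hLagEval, Finset.sum_div]
    rw [Finset.sum_congr rfl fun i _ => hterm i]
    rw [Fintype.sum_sum_type]
    rw [Finset.sum_congr rfl fun r _ => hterm_l r,
        Finset.sum_congr rfl fun r _ => hterm_r r]
    rw [Finset.sum_sub_distrib, Finset.sum_neg_distrib]
    ring
  have hZy : Z.eval y = D.eval y * eval y (Z /ₘ D) + rem.eval y := by
    conv_lhs => rw [← modByMonic_add_div Z D]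
    simp [hremdef]
    ring
  rw [← hsplit, hZy, ← hfrac]
  field_simp
  ring
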